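/- Let v_1, …, v_s ∈ ℤ^n, let σ∨ = {x ∈ ℝ^n : ⟨x, v_i⟩ ≥ 0 for all i}, and set S = σ∨ ∩ ℤ^n. If E ⊆ ℤ^n satisfies E + S ⊆ E, then convexHull(E) + σ∨ ⊆ convexHull(E); in particular, for every z ∈ convexHull(E) one has z + σ∨ ⊆ convexHull(E). -/

import Mathlib

open Pointwise Finset

lemma cube_mem_convexHull {N : ℕ} {V : Type*} [AddCommGroup V] [Module ℝ V]
    (T : (Fin N → ℝ) →ₗ[ℝ] V) (a b : Fin N → ℝ) (t : Fin N → ℝ)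
    (ht : ∀ j, t j ∈ Set.Icc (a j) (b j)) :
    T t ∈ convexHull ℝ (T '' {t' | ∀ j, t' j = a j ∨ t' j = b j}) := by
  classical
  suffices H : ∀ (F : Finset (Fin N)) (t : Fin N → ℝ), (∀ j, t j ∈ Set.Icc (a j) (b j)) →
      (∀ j, j ∉ F → t j = a j ∨ t j = b j) →
      T t ∈ convexHull ℝ (T '' {t' | ∀ j, t' j = a j ∨ t' j = b j}) by
    exact H Finset.univ t ht (by simp)
  intro F
  induction F using Finset.induction_on with
  | empty =>
    intro t ht h
    exact subset_convexHull _ _ ⟨t, fun j => h j (by simp), rfl⟩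
  | @insert j F hjF ih =>
    intro t ht hfree
    by_cases hab : a j = b j
    · refine ih t ht fun k hk => ?_
      by_cases hkj : k = j
      · subst hkj
        left
        have := ht k
        have h1 := this.1; have h2 := this.2
        rw [← hab] at h2
        linarith
      · exact hfree k (by simp [hkj, hk])
    · have hab' : a j < b j := lt_of_le_of_ne (le_trans (ht j).1 (ht j).2) hab
      set t0 := Function.update t j (a j) with ht0
      set t1 := Function.update t j (b j) with ht1
      have ht0' : ∀ k, t0 k ∈ Set.Icc (a k) (b k) := by
        intro k
        by_cases hkj : k = j
        · subst hkj; simp [ht0, le_of_lt hab']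
        · simpa [ht0, Function.update_of_ne hkj] using ht k
      have ht1' : ∀ k, t1 k ∈ Set.Icc (a k) (b k) := by
        intro k
        by_cases hkj : k = j
        · subst hkj; simp [ht1, le_of_lt hab']
        · simpa [ht1, Function.update_of_ne hkj] using ht k
      have m0 := ih t0 ht0' (fun k hk => by
        by_cases hkj : k = j
        · subst hkj; left; simp [ht0]
        · rw [ht0, Function.update_of_ne hkj]
          exact hfree k (by simp [hkj, hk]))
      have m1 := ih t1 ht1' (fun k hk => by
        by_cases hkj : k = j
        · subst hkj; right; simp [ht1]
        · rw [ht1, Function.update_of_ne hkj]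
          exact hfree k (by simp [hkj, hk]))
      set lam := (b j - t j) / (b j - a j) with hlam
      set mu := (t j - a j) / (b j - a j) with hmu
      have hlam0 : 0 ≤ lam := by
        apply div_nonneg _ (le_of_lt (by linarith))
        linarith [(ht j).2]
      have hmu0 : 0 ≤ mu := by
        apply div_nonneg _ (le_of_lt (by linarith))
        linarith [(ht j).1]
      have hsum : lam + mu = 1 := by
        rw [hlam, hmu, ← add_div]
        have h9 : b j - t j + (t j - a j) = b j - a j := by ring
        rw [h9, div_self (sub_ne_zero.mpr (ne_of_gt hab'))]
      have htt : t = lam • t0 + mu • t1 := by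
        funext k
        by_cases hkj : k = j
        · have hne : b j - a j ≠ 0 := sub_ne_zero.mpr (ne_of_gt hab')
          have h8 : lam * a j + mu * b j = t j := by
            rw [hlam, hmu, div_mul_eq_mul_div, div_mul_eq_mul_div, ← add_div,
              div_eq_iff hne]
            ring
          subst hkj
          simpa [ht0, ht1, Function.update_self] using h8.symm
        · simp only [Pi.add_apply, Pi.smul_apply, ht0, ht1, Function.update_of_ne hkj,
            smul_eq_mul]
          rw [← add_mul, hsum, one_mul]
      have : T t = lam • T t0 + mu • T t1 := by
        rw [htt, map_add, map_smul, map_smul]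
      rw [this]
      exact (convex_convexHull ℝ _) m0 m1 hlam0 hmu0 hsum

lemma rat_mem_convexHull {n s : ℕ} (v : Fin s → Fin n → ℤ) (q : Fin n → ℚ)
    (hq : ∀ i, 0 ≤ ∑ j, (q j : ℝ) * (v i j : ℝ)) :
    (fun k => (q k : ℝ)) ∈ convexHull ℝ
      ((fun (m : Fin n → ℤ) (j : Fin n) => (m j : ℝ)) ''
        {m : Fin n → ℤ | ∀ i, 0 ≤ ∑ j, (m j : ℝ) * (v i j : ℝ)}) := by
  classical
  set D : ℚ := ∏ k, ((q k).den : ℚ) with hD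
  have hD1 : 1 ≤ D := by
    rw [hD, ← Nat.cast_prod]
    exact Nat.one_le_cast.mpr (Finset.prod_pos fun k _ => (q k).pos)
  have hDpos : 0 < D := lt_of_lt_of_le one_pos hD1
  set m : Fin n → ℤ := fun k => (q k).num * ∏ k' ∈ Finset.univ.erase k, ((q k').den : ℤ)
    with hmdef
  have hm : ∀ k, (m k : ℚ) = D * q k := by
    intro k
    have hnum : ((q k).num : ℚ) = q k * ((q k).den : ℚ) := by
      field_simp [Rat.num_div_den]
      rw [eq_comm, ← eq_div_iff (Nat.cast_ne_zero.mpr (q k).den_nz : ((q k).den : ℚ) ≠ 0)]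
      exact (Rat.num_div_den (q k)).symm
    calc (m k : ℚ) = ((q k).num : ℚ) * ∏ k' ∈ Finset.univ.erase k, ((q k').den : ℚ) := by
          push_cast [hmdef]; ring
      _ = q k * (((q k).den : ℚ) * ∏ k' ∈ Finset.univ.erase k, ((q k').den : ℚ)) := by
          rw [hnum]; ring
      _ = D * q k := by
          have hsplit : ((q k).den : ℚ) * ∏ k' ∈ Finset.univ.erase k, ((q k').den : ℚ) = D := by
            rw [hD]
            exact Finset.mul_prod_erase Finset.univ (fun k' => ((q k').den : ℚ))
              (Finset.mem_univ k)
          rw [hsplit]; ring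
  have hmR : ∀ k, ((m k : ℤ) : ℝ) = (D : ℝ) * (q k : ℝ) := by
    intro k
    have := hm k
    exact_mod_cast congrArg (fun x : ℚ => (x : ℝ)) this
  have hmS : m ∈ {m : Fin n → ℤ | ∀ i, 0 ≤ ∑ j, (m j : ℝ) * (v i j : ℝ)} := by
    intro i
    have : ∑ j, ((m j : ℤ) : ℝ) * (v i j : ℝ) = (D : ℝ) * ∑ j, (q j : ℝ) * (v i j : ℝ) := by
      rw [Finset.mul_sum]
      exact Finset.sum_congr rfl fun j _ => by rw [hmR j]; ring
    rw [this]
    have : (0:ℝ) < (D:ℝ) := by exact_mod_cast hDpos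
    exact mul_nonneg this.le (hq i)
  have h0S : (0 : Fin n → ℤ) ∈ {m : Fin n → ℤ | ∀ i, 0 ≤ ∑ j, (m j : ℝ) * (v i j : ℝ)} := by
    intro i; simp
  set A := (fun (m : Fin n → ℤ) (j : Fin n) => (m j : ℝ)) ''
      {m : Fin n → ℤ | ∀ i, 0 ≤ ∑ j, (m j : ℝ) * (v i j : ℝ)} with hA
  have hx1 : (fun (j : Fin n) => ((m j : ℤ) : ℝ)) ∈ convexHull ℝ A :=
    subset_convexHull ℝ A (Set.mem_image_of_mem _ hmS)
  have hx2 : (fun (j : Fin n) => (((0 : Fin n → ℤ) j : ℤ) : ℝ)) ∈ convexHull ℝ A :=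
    subset_convexHull ℝ A (Set.mem_image_of_mem _ h0S)
  have hdR : (0:ℝ) < (D:ℝ) := by exact_mod_cast hDpos
  have hd1 : (1:ℝ) ≤ (D:ℝ) := by exact_mod_cast hD1
  have key : (fun k => (q k : ℝ)) =
      (1/(D:ℝ)) • (fun (j : Fin n) => ((m j : ℤ) : ℝ)) +
      (1 - 1/(D:ℝ)) • (fun (j : Fin n) => (((0 : Fin n → ℤ) j : ℤ) : ℝ)) := by
    funext k
    simp only [Pi.add_apply, Pi.smul_apply, smul_eq_mul, Pi.zero_apply, Int.cast_zero, mul_zero,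
      add_zero, hmR k]
    field_simp
  rw [key]
  exact (convex_convexHull ℝ _) hx1 hx2 (by positivity)
    (by rw [sub_nonneg]; rw [div_le_one hdR]; exact hd1) (by ring)

lemma sigma_mem_convexHull {n s : ℕ} (v : Fin s → Fin n → ℤ) (x : Fin n → ℝ)
    (hx : ∀ i, 0 ≤ ∑ j, x j * (v i j : ℝ)) :
    x ∈ convexHull ℝ ((fun (m : Fin n → ℤ) (j : Fin n) => (m j : ℝ)) ''
        {m : Fin n → ℤ | ∀ i, 0 ≤ ∑ j, (m j : ℝ) * (v i j : ℝ)}) := by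
  classical
  set A := (fun (m : Fin n → ℤ) (j : Fin n) => (m j : ℝ)) ''
      {m : Fin n → ℤ | ∀ i, 0 ≤ ∑ j, (m j : ℝ) * (v i j : ℝ)} with hA
  -- the tight constraints
  let ι := {i : Fin s // ∑ j, x j * (v i j : ℝ) = 0}
  -- ℚ-side data
  let M : Matrix ι (Fin n) ℚ := Matrix.of fun i j => (v i.1 j : ℚ)
  let f : (Fin n → ℚ) →ₗ[ℚ] (ι → ℚ) := M.mulVecLin
  obtain ⟨C, hC⟩ := Submodule.exists_isCompl (LinearMap.range f)
  let proj := Submodule.linearProjOfIsCompl _ _ hC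
  obtain ⟨h, hh⟩ := f.rangeRestrict.exists_rightInverse_of_surjective
    (LinearMap.range_rangeRestrict f)
  let g : (ι → ℚ) →ₗ[ℚ] (Fin n → ℚ) := h ∘ₗ proj
  have h2 : ∀ z : LinearMap.range f, f (h z) = z := by
    intro z
    have h3 := LinearMap.congr_fun hh z
    have h4 := congrArg (fun t : LinearMap.range f => (t : ι → ℚ)) h3
    simpa using h4
  have hg : ∀ y : Fin n → ℚ, f (g (f y)) = f y := by
    intro y
    have h1 : proj (f y) = ⟨f y, LinearMap.mem_range_self f y⟩ :=
      Submodule.linearProjOfIsCompl_apply_left hC ⟨f y, LinearMap.mem_range_self f y⟩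
    show f (h (proj (f y))) = f y
    rw [h1, h2]
  let pi1 : (Fin n → ℚ) →ₗ[ℚ] (Fin n → ℚ) := LinearMap.id - g ∘ₗ f
  let w : Fin n → (Fin n → ℚ) := fun j => pi1 (Pi.single j 1)
  have hw0 : ∀ j, f (w j) = 0 := by
    intro j
    show f (Pi.single j 1 - g (f (Pi.single j 1))) = 0
    rw [map_sub, hg, sub_self]
  -- constraint values of the w's (rational form)
  have hwc : ∀ j (i : ι), ∑ k, (v i.1 k : ℚ) * w j k = 0 := by
    intro j i
    have h5 := congrFun (hw0 j) i
    simpa [f, M, Matrix.mulVecLin_apply, Matrix.mulVec, dotProduct] using h5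
  let G : ι → (Fin n → ℚ) := fun i => g (Pi.single i 1)
  have hfe : ∀ j, f (Pi.single j 1) = fun i : ι => (v i.1 j : ℚ) := by
    intro j
    funext i
    simp [f, M, Matrix.mulVecLin_apply, Matrix.mulVec, dotProduct, Pi.single_apply]
  have hwformula : ∀ j k, w j k =
      (if j = k then (1:ℚ) else 0) - ∑ i : ι, (v i.1 j : ℚ) * G i k := by
    intro j k
    have hgexp : g (f (Pi.single j 1)) = ∑ i : ι, (v i.1 j : ℚ) • G i := by
      rw [hfe j, LinearMap.pi_apply_eq_sum_univ g (fun i : ι => (v i.1 j : ℚ))]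
      refine Finset.sum_congr rfl fun i _ => ?_
      congr 1
      simp [G, Pi.single_apply]
      congr 1
      funext i'
      simp [Pi.single_apply, eq_comm]
    have hwk : w j k = (Pi.single j 1 : Fin n → ℚ) k - (g (f (Pi.single j 1))) k := by
      simp [w, pi1, LinearMap.sub_apply, LinearMap.comp_apply]
    rw [hwk, hgexp]
    simp only [Pi.single_apply, Finset.sum_apply, Pi.smul_apply, smul_eq_mul]
    congr 1
    by_cases hjk : j = k <;> simp [hjk, eq_comm]
  -- real-side key identity
  have hxw : ∀ k, ∑ j, x j * ((w j k : ℚ) : ℝ) = x k := by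
    intro k
    have hcast : ∀ j, ((w j k : ℚ) : ℝ) =
        (if j = k then (1:ℝ) else 0) - ∑ i : ι, (v i.1 j : ℝ) * ((G i k : ℚ) : ℝ) := by
      intro j
      rw [hwformula j k]
      push_cast [apply_ite (fun q : ℚ => (q : ℝ))]
      norm_num
    calc ∑ j, x j * ((w j k : ℚ) : ℝ)
        = ∑ j, (x j * (if j = k then (1:ℝ) else 0)
            - ∑ i : ι, ((G i k : ℚ) : ℝ) * (x j * (v i.1 j : ℝ))) := by
          refine Finset.sum_congr rfl fun j _ => ?_
          rw [hcast j, mul_sub, Finset.mul_sum]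
          congr 1
          exact Finset.sum_congr rfl fun i _ => by ring
      _ = x k - ∑ i : ι, ((G i k : ℚ) : ℝ) * ∑ j, x j * (v i.1 j : ℝ) := by
          rw [Finset.sum_sub_distrib, Finset.sum_comm]
          congr 1
          · simp [Finset.sum_ite_eq' Finset.univ k x]
          · exact Finset.sum_congr rfl fun i _ => by rw [Finset.mul_sum]
      _ = x k := by
          have : ∀ i : ι, ((G i k : ℚ) : ℝ) * ∑ j, x j * (v i.1 j : ℝ) = 0 := by
            intro i; rw [i.2, mul_zero]
          rw [Finset.sum_congr rfl fun i _ => this i]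
          simp
  -- the real linear map T
  let T : (Fin n → ℝ) →ₗ[ℝ] (Fin n → ℝ) :=
    (Matrix.of fun k j => ((w j k : ℚ) : ℝ)).mulVecLin
  have hT : ∀ t k, T t k = ∑ j, ((w j k : ℚ) : ℝ) * t j := by
    intro t k
    simp [T, Matrix.mulVecLin_apply, Matrix.mulVec, dotProduct]
  have hTx : T x = x := by
    funext k
    rw [hT]
    rw [← hxw k]
    exact Finset.sum_congr rfl fun j _ => by ring
  -- constraint coefficients of T
  let c : Fin s → Fin n → ℝ := fun i j => ∑ k, ((w j k : ℚ) : ℝ) * (v i k : ℝ)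
  have hTc : ∀ (i : Fin s) (t : Fin n → ℝ),
      ∑ k, T t k * (v i k : ℝ) = ∑ j, t j * c i j := by
    intro i t
    calc ∑ k, T t k * (v i k : ℝ)
        = ∑ k, ∑ j, ((w j k : ℚ) : ℝ) * t j * (v i k : ℝ) := by
          refine Finset.sum_congr rfl fun k _ => ?_
          rw [hT, Finset.sum_mul]
      _ = ∑ j, ∑ k, ((w j k : ℚ) : ℝ) * t j * (v i k : ℝ) := Finset.sum_comm
      _ = ∑ j, t j * c i j := by
          refine Finset.sum_congr rfl fun j _ => ?_
          rw [Finset.mul_sum]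
          exact Finset.sum_congr rfl fun k _ => by ring
  have hctight : ∀ (i : Fin s), (∑ j, x j * (v i j : ℝ) = 0) → ∀ j, c i j = 0 := by
    intro i hi j
    have h6 := hwc j ⟨i, hi⟩
    have h7 : ((∑ k, (v i k : ℚ) * w j k : ℚ) : ℝ) = 0 := by rw [h6]; norm_num
    push_cast at h7
    rw [← h7]
    exact Finset.sum_congr rfl fun k _ => by push_cast; ring
  -- choose δ
  have hδ : ∃ δ : ℝ, 0 < δ ∧ ∀ i : Fin s, ∑ j, x j * (v i j : ℝ) ≠ 0 →
      δ * (∑ j, |c i j|) < ∑ j, x j * (v i j : ℝ) := by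
    let val : Fin s → ℝ := fun i =>
      if ∑ j, x j * (v i j : ℝ) = 0 then 1
      else (∑ j, x j * (v i j : ℝ)) / ((∑ j, |c i j|) + 1)
    have hvalpos : ∀ i, 0 < val i := by
      intro i
      by_cases hi : ∑ j, x j * (v i j : ℝ) = 0
      · simp [val, hi]
      · have h8 : 0 < ∑ j, x j * (v i j : ℝ) := lt_of_le_of_ne (hx i) (Ne.symm hi)
        have h9 : 0 < (∑ j, |c i j|) + 1 := by positivity
        simp only [val, hi, if_false]
        positivity
    refine ⟨(insert (1:ℝ) (Finset.univ.image val)).min'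
      (Finset.insert_nonempty _ _), ?_, ?_⟩
    · have := (insert (1:ℝ) (Finset.univ.image val)).min'_mem (Finset.insert_nonempty _ _)
      rcases Finset.mem_insert.mp this with h | h
      · rw [h]; norm_num
      · obtain ⟨i, _, hi⟩ := Finset.mem_image.mp h
        rw [← hi]; exact hvalpos i
    · intro i hi
      have hle : (insert (1:ℝ) (Finset.univ.image val)).min'
          (Finset.insert_nonempty _ _) ≤ val i :=
        Finset.min'_le _ _ (Finset.mem_insert_of_mem
          (Finset.mem_image_of_mem val (Finset.mem_univ i)))
      have h8 : 0 < ∑ j, x j * (v i j : ℝ) := lt_of_le_of_ne (hx i) (Ne.symm hi)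
      have h9 : 0 ≤ ∑ j, |c i j| := Finset.sum_nonneg fun j _ => abs_nonneg _
      have hvi : val i = (∑ j, x j * (v i j : ℝ)) / ((∑ j, |c i j|) + 1) := by
        simp [val, hi]
      calc (insert (1:ℝ) (Finset.univ.image val)).min' (Finset.insert_nonempty _ _)
            * (∑ j, |c i j|) ≤ val i * (∑ j, |c i j|) := by
            apply mul_le_mul_of_nonneg_right hle h9
        _ < ∑ j, x j * (v i j : ℝ) := by
            rw [hvi, div_mul_eq_mul_div, div_lt_iff₀ (by positivity)]
            nlinarith
  obtain ⟨δ, hδpos, hδbound⟩ := hδ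
  -- rational endpoints
  have haq : ∀ j, ∃ aq : ℚ, x j - δ < (aq : ℝ) ∧ (aq : ℝ) < x j := by
    intro j; exact exists_rat_btwn (by linarith)
  have hbq : ∀ j, ∃ bq : ℚ, x j < (bq : ℝ) ∧ (bq : ℝ) < x j + δ := by
    intro j; exact exists_rat_btwn (by linarith)
  choose aq haq1 haq2 using haq
  choose bq hbq1 hbq2 using hbq
  -- apply the cube lemma
  have hcube := cube_mem_convexHull T (fun j => (aq j : ℝ)) (fun j => (bq j : ℝ)) x
    (fun j => ⟨(haq2 j).le, (hbq1 j).le⟩)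
  rw [hTx] at hcube
  -- vertices are in convexHull A
  have hvert : T '' {t' | ∀ j, t' j = ((aq j : ℚ) : ℝ) ∨ t' j = ((bq j : ℚ) : ℝ)}
      ⊆ convexHull ℝ A := by
    rintro y ⟨t', ht', rfl⟩
    -- rational coordinates
    let tq : Fin n → ℚ := fun j => if t' j = ((aq j : ℚ) : ℝ) then aq j else bq j
    have htq : ∀ j, t' j = ((tq j : ℚ) : ℝ) := by
      intro j
      by_cases h9 : t' j = ((aq j : ℚ) : ℝ)
      · simp [tq, h9]
      · rcases ht' j with h10 | h10
        · exact absurd h10 h9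
        · have h11 : tq j = bq j := if_neg h9
          rw [h10, h11]
    let qv : Fin n → ℚ := fun k => ∑ j, w j k * tq j
    have hTt' : T t' = fun k => ((qv k : ℚ) : ℝ) := by
      funext k
      rw [hT]
      push_cast [qv]
      exact Finset.sum_congr rfl fun j _ => by rw [htq j]
    have hbound : ∀ j, |t' j - x j| ≤ δ := by
      intro j
      rcases ht' j with h10 | h10 <;> rw [h10] <;>
        exact abs_le.mpr ⟨by linarith [haq1 j, haq2 j, hbq1 j, hbq2 j],
          by linarith [haq1 j, haq2 j, hbq1 j, hbq2 j]⟩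
    have hconstr : ∀ i, 0 ≤ ∑ k, ((qv k : ℚ) : ℝ) * (v i k : ℝ) := by
      intro i
      have hTt'c : ∑ k, ((qv k : ℚ) : ℝ) * (v i k : ℝ) = ∑ j, t' j * c i j := by
        rw [← hTc i t']
        refine Finset.sum_congr rfl fun k _ => ?_
        rw [hTt']
      rw [hTt'c]
      by_cases hi : ∑ j, x j * (v i j : ℝ) = 0
      · have := hctight i hi
        simp [this]
      · have hsplit : ∑ j, t' j * c i j
            = ∑ j, x j * c i j + ∑ j, (t' j - x j) * c i j := by
          rw [← Finset.sum_add_distrib]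
          exact Finset.sum_congr rfl fun j _ => by ring
        have hxc : ∑ j, x j * c i j = ∑ j, x j * (v i j : ℝ) := by
          rw [← hTc i x]
          refine Finset.sum_congr rfl fun k _ => by rw [hTx]
        have habs : |∑ j, (t' j - x j) * c i j| ≤ δ * ∑ j, |c i j| := by
          calc |∑ j, (t' j - x j) * c i j| ≤ ∑ j, |(t' j - x j) * c i j| :=
                Finset.abs_sum_le_sum_abs _ _
            _ ≤ ∑ j, δ * |c i j| := by
                refine Finset.sum_le_sum fun j _ => ?_
                rw [abs_mul]
                exact mul_le_mul_of_nonneg_right (hbound j) (abs_nonneg _)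
            _ = δ * ∑ j, |c i j| := by rw [Finset.mul_sum]
        have := hδbound i hi
        have h11 := (abs_le.mp habs).1
        rw [hsplit, hxc]
        linarith
    have := rat_mem_convexHull v qv hconstr
    rw [hTt']
    exact this
  exact convexHull_min hvert (convex_convexHull ℝ A) hcube

/-- Let `v 1, …, v s ∈ ℤ^n`, let
`σ∨ = {x ∈ ℝ^n : ⟨x, v i⟩ ≥ 0 for all i}`, and set `S = σ∨ ∩ ℤ^n`.  If `E ⊆ ℤ^n`
satisfies `E + S ⊆ E`, then `convexHull E + σ∨ ⊆ convexHull E` (embedding `ℤ^n` in `ℝ^n`);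
in particular, for every `z ∈ convexHull E` one has `z + σ∨ ⊆ convexHull E`. -/
theorem stmt_6 {n s : ℕ} (v : Fin s → Fin n → ℤ)
    (E : Set (Fin n → ℤ))
    (hE : E + {m : Fin n → ℤ | ∀ i, 0 ≤ ∑ j, (m j : ℝ) * (v i j : ℝ)} ⊆ E) :
    (convexHull ℝ ((fun (m : Fin n → ℤ) (j : Fin n) => (m j : ℝ)) '' E) +
        {x : Fin n → ℝ | ∀ i, 0 ≤ ∑ j, x j * (v i j : ℝ)} ⊆
      convexHull ℝ ((fun (m : Fin n → ℤ) (j : Fin n) => (m j : ℝ)) '' E)) ∧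
    ∀ z ∈ convexHull ℝ ((fun (m : Fin n → ℤ) (j : Fin n) => (m j : ℝ)) '' E),
      {z} + {x : Fin n → ℝ | ∀ i, 0 ≤ ∑ j, x j * (v i j : ℝ)} ⊆
        convexHull ℝ ((fun (m : Fin n → ℤ) (j : Fin n) => (m j : ℝ)) '' E) := by
  classical
  set coeF := fun (m : Fin n → ℤ) (j : Fin n) => (m j : ℝ) with hcoeF
  set Eimg := coeF '' E with hEimg
  set Simg := coeF '' {m : Fin n → ℤ | ∀ i, 0 ≤ ∑ j, (m j : ℝ) * (v i j : ℝ)} with hSimg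
  have hstep : ∀ e ∈ E, ∀ xσ : Fin n → ℝ, (∀ i, 0 ≤ ∑ j, xσ j * (v i j : ℝ)) →
      coeF e + xσ ∈ convexHull ℝ Eimg := by
    intro e he xσ hxσ
    have hxS : xσ ∈ convexHull ℝ Simg := sigma_mem_convexHull v xσ hxσ
    have hmem : coeF e + xσ ∈ {coeF e} + convexHull ℝ Simg :=
      Set.add_mem_add (Set.mem_singleton _) hxS
    have heq : {coeF e} + convexHull ℝ Simg = convexHull ℝ ({coeF e} + Simg) := by
      rw [convexHull_add, convexHull_singleton]
    have hsub : {coeF e} + Simg ⊆ Eimg := by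
      rintro y ⟨a, ha, b, ⟨m, hm, rfl⟩, rfl⟩
      rw [Set.mem_singleton_iff.mp ha]
      refine ⟨e + m, hE (Set.add_mem_add he hm), ?_⟩
      funext j
      simp [coeF]
    rw [heq] at hmem
    exact convexHull_min (hsub.trans (subset_convexHull ℝ Eimg))
      (convex_convexHull ℝ Eimg) hmem
  have hmain : convexHull ℝ Eimg + {x : Fin n → ℝ | ∀ i, 0 ≤ ∑ j, x j * (v i j : ℝ)} ⊆
      convexHull ℝ Eimg := by
    rintro y ⟨z, hz, xσ, hxσ, rfl⟩
    have hmem : z + xσ ∈ convexHull ℝ Eimg + {xσ} :=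
      Set.add_mem_add hz (Set.mem_singleton _)
    have heq : convexHull ℝ Eimg + ({xσ} : Set (Fin n → ℝ)) =
        convexHull ℝ (Eimg + {xσ}) := by
      rw [convexHull_add, convexHull_singleton]
    have hsub : Eimg + ({xσ} : Set (Fin n → ℝ)) ⊆ convexHull ℝ Eimg := by
      rintro y' ⟨a, ⟨e, he, rfl⟩, b, hb, rfl⟩
      rw [Set.mem_singleton_iff.mp hb]
      exact hstep e he xσ hxσ
    rw [heq] at hmem
    exact convexHull_min hsub (convex_convexHull ℝ Eimg) hmem
  refine ⟨hmain, ?_⟩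
  intro z hz
  rintro y ⟨z', hz', xσ, hxσ, rfl⟩
  rw [Set.mem_singleton_iff.mp hz']
  exact hmain (Set.add_mem_add hz hxσ)
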